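/- Let c: ℝ → ℝ, k > 0, and let f: ℝ → ℝ be differentiable with f > 0 and f'(x) = f(x)/(c(x) − x) wherever c(x) ≠ x. Define s(ρ,p) = k·ln(f(p/ρ)/ρ) for ρ > 0. Then at any point (ρ,p) with ρ > 0 and c(π) ≠ π, where π = p/ρ: ∂_p s = k/(ρ(c(π) − π)) ≠ 0, ∂_ρ s = −k c(π)/(ρ(c(π) − π)), and hence −(∂_ρ s)/(∂_p s) = c(π). -/

import Mathlib

theorem stmt_11 (c f : ℝ → ℝ) (k ρ p : ℝ) (hk : 0 < k)
    (hf : Differentiable ℝ f) (hfpos : ∀ x, 0 < f x)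
    (hf' : ∀ x, c x ≠ x → deriv f x = f x / (c x - x))
    (hρ : 0 < ρ) (hc : c (p / ρ) ≠ p / ρ) :
    fderiv ℝ (fun q : ℝ × ℝ => k * Real.log (f (q.2 / q.1) / q.1)) (ρ, p) (0, 1) =
        k / (ρ * (c (p / ρ) - p / ρ)) ∧
      fderiv ℝ (fun q : ℝ × ℝ => k * Real.log (f (q.2 / q.1) / q.1)) (ρ, p) (0, 1) ≠ 0 ∧
      fderiv ℝ (fun q : ℝ × ℝ => k * Real.log (f (q.2 / q.1) / q.1)) (ρ, p) (1, 0) =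
        -(k * c (p / ρ)) / (ρ * (c (p / ρ) - p / ρ)) ∧
      -(fderiv ℝ (fun q : ℝ × ℝ => k * Real.log (f (q.2 / q.1) / q.1)) (ρ, p) (1, 0)) /
          fderiv ℝ (fun q : ℝ × ℝ => k * Real.log (f (q.2 / q.1) / q.1)) (ρ, p) (0, 1) =
        c (p / ρ) := by
  have hρ0 : ρ ≠ 0 := hρ.ne'
  obtain ⟨b, rfl⟩ : ∃ b, p = ρ * b := ⟨p / ρ, (mul_div_cancel₀ p hρ0).symm⟩
  have hπ : ρ * b / ρ = b := by field_simp
  simp only [hπ] at hc ⊢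
  have hsub : c b - b ≠ 0 := sub_ne_zero.mpr hc
  have hf0 : f b ≠ 0 := (hfpos b).ne'
  -- derivative of q.1⁻¹
  have hinv : HasFDerivAt (fun q : ℝ × ℝ => q.1⁻¹)
      ((-(ρ ^ 2)⁻¹) • ContinuousLinearMap.fst ℝ ℝ ℝ) (ρ, ρ * b) :=
    (hasDerivAt_inv hρ0).comp_hasFDerivAt (ρ, ρ * b) hasFDerivAt_fst
  -- derivative of π = q.2 * q.1⁻¹
  have hπd : HasFDerivAt (fun q : ℝ × ℝ => q.2 * q.1⁻¹)
      ((ρ * b) • ((-(ρ ^ 2)⁻¹) • ContinuousLinearMap.fst ℝ ℝ ℝ) +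
        ρ⁻¹ • ContinuousLinearMap.snd ℝ ℝ ℝ) (ρ, ρ * b) :=
    (hasFDerivAt_snd (𝕜 := ℝ)).mul hinv
  -- derivative of log ∘ f at b
  have hfd : HasDerivAt f (f b / (c b - b)) b := by
    have := (hf b).hasDerivAt
    rwa [hf' _ hc] at this
  have hlf : HasDerivAt (fun x => Real.log (f x)) ((f b)⁻¹ * (f b / (c b - b))) b :=
    (Real.hasDerivAt_log hf0).comp _ hfd
  have hπval : (ρ * b) * ρ⁻¹ = b := by field_simp
  have hA : HasFDerivAt (fun q : ℝ × ℝ => Real.log (f (q.2 * q.1⁻¹)))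
      (((f b)⁻¹ * (f b / (c b - b))) •
        ((ρ * b) • ((-(ρ ^ 2)⁻¹) • ContinuousLinearMap.fst ℝ ℝ ℝ) +
          ρ⁻¹ • ContinuousLinearMap.snd ℝ ℝ ℝ)) (ρ, ρ * b) := by
    have hlf2 : HasDerivAt (fun x => Real.log (f x)) ((f b)⁻¹ * (f b / (c b - b)))
        ((ρ, ρ * b).2 * (ρ, ρ * b).1⁻¹) := by simpa [hπval] using hlf
    exact hlf2.comp_hasFDerivAt (ρ, ρ * b) hπd
  have hB : HasFDerivAt (fun q : ℝ × ℝ => Real.log q.1)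
      (ρ⁻¹ • ContinuousLinearMap.fst ℝ ℝ ℝ) (ρ, ρ * b) :=
    by have := (Real.hasDerivAt_log hρ0).comp_hasFDerivAt (ρ, ρ * b) (hasFDerivAt_fst (𝕜 := ℝ) (p := (ρ, ρ * b))); exact this
  set L : ℝ × ℝ →L[ℝ] ℝ :=
    k • (((f b)⁻¹ * (f b / (c b - b))) •
        ((ρ * b) • ((-(ρ ^ 2)⁻¹) • ContinuousLinearMap.fst ℝ ℝ ℝ) +
          ρ⁻¹ • ContinuousLinearMap.snd ℝ ℝ ℝ) -
      ρ⁻¹ • ContinuousLinearMap.fst ℝ ℝ ℝ) with hL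
  have key0 : HasFDerivAt
      (fun q : ℝ × ℝ => k * (Real.log (f (q.2 * q.1⁻¹)) - Real.log q.1)) L (ρ, ρ * b) :=
    (hA.sub hB).const_mul k
  have heq : (fun q : ℝ × ℝ => k * Real.log (f (q.2 / q.1) / q.1)) =ᶠ[nhds (ρ, ρ * b)]
      (fun q : ℝ × ℝ => k * (Real.log (f (q.2 * q.1⁻¹)) - Real.log q.1)) := by
    have hopen : IsOpen {q : ℝ × ℝ | 0 < q.1} := isOpen_lt continuous_const continuous_fst
    filter_upwards [hopen.mem_nhds (by simpa using hρ)] with q hq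
    rw [div_eq_mul_inv q.2 q.1, Real.log_div (hfpos _).ne' hq.ne']
  have key : HasFDerivAt (fun q : ℝ × ℝ => k * Real.log (f (q.2 / q.1) / q.1)) L (ρ, ρ * b) :=
    key0.congr_of_eventuallyEq heq
  have hfd' : fderiv ℝ (fun q : ℝ × ℝ => k * Real.log (f (q.2 / q.1) / q.1)) (ρ, ρ * b) = L :=
    key.fderiv
  have hv1 : L (0, 1) = k / (ρ * (c b - b)) := by
    simp [hL, ContinuousLinearMap.smul_apply, ContinuousLinearMap.sub_apply,
      ContinuousLinearMap.add_apply]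
    field_simp
  have hv2 : L (1, 0) = -(k * c b) / (ρ * (c b - b)) := by
    simp [hL, ContinuousLinearMap.smul_apply, ContinuousLinearMap.sub_apply,
      ContinuousLinearMap.add_apply]
    field_simp
    ring
  have hne : k / (ρ * (c b - b)) ≠ 0 :=
    div_ne_zero hk.ne' (mul_ne_zero hρ0 hsub)
  rw [hfd', hv1, hv2]
  refine ⟨rfl, hne, rfl, ?_⟩
  rw [div_eq_iff hne]
  field_simp
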